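/- Let p, q, r be distinct primes and let G be a non-abelian solvable group of order p · q · r. Then the intersection graph of subgroups I(G) contains a triangle, i.e., I(G) has a clique on 3 vertices. -/

import Mathlib

open SimpleGraph

/-- The intersection graph of subgroups of a group `G`: vertices are the
nontrivial proper subgroups of `G`, and two distinct vertices are adjacent
iff the corresponding subgroups have nontrivial intersection. -/
def interGraph (G : Type*) [Group G] :
    SimpleGraph {H : Subgroup G // H ≠ ⊥ ∧ H ≠ ⊤} where
  Adj H K := H ≠ K ∧ H.1 ⊓ K.1 ≠ ⊥
  symm := by
    refine ⟨?_⟩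
    rintro H K ⟨hne, hint⟩
    exact ⟨hne.symm, by rwa [inf_comm] at hint⟩
  loopless := by
    refine ⟨?_⟩
    rintro H ⟨hne, _⟩
    exact hne rfl

/-- Divisors of a product of two distinct primes. -/
lemma IGaux_dvd_two_primes {q r d : ℕ} (hq : q.Prime) (hr : r.Prime)
    (hd : d ∣ q * r) : d = 1 ∨ d = q ∨ d = r ∨ d = q * r := by
  by_cases hdq : q ∣ d
  · obtain ⟨e, rfl⟩ := hdq
    have he : e ∣ r := (mul_dvd_mul_iff_left hq.pos.ne').mp hd
    rcases hr.eq_one_or_self_of_dvd e he with rfl | rfl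
    · right; left; simp
    · right; right; right; rfl
  · have hcop : d.Coprime q := Nat.Coprime.symm ((hq.coprime_iff_not_dvd).mpr hdq)
    have : d ∣ r := (Nat.Coprime.dvd_of_dvd_mul_left hcop hd)
    rcases hr.eq_one_or_self_of_dvd d this with rfl | rfl
    · left; rfl
    · right; right; left; rfl

/-- In a group of order `a * b` with `a < b` primes, the Sylow `b`-subgroup is
characteristic of order `b`. -/
lemma IGaux_char_subgroup {H : Type*} [Group H] [Finite H] {a b : ℕ}
    (ha : a.Prime) (hb : b.Prime) (hab : a < b) (hcard : Nat.card H = a * b) :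
    ∃ P : Subgroup H, P.Characteristic ∧ Nat.card P = b := by
  haveI : Fact b.Prime := ⟨hb⟩
  obtain ⟨P⟩ := (Sylow.nonempty : Nonempty (Sylow b H))
  have hne : a ≠ b := hab.ne
  have hcardP : Nat.card P = b := by
    rw [Sylow.card_eq_multiplicity, hcard,
      Nat.factorization_mul ha.pos.ne' hb.pos.ne']
    simp [ha.factorization, hb.factorization, Finsupp.single_apply, hne, pow_one]
  have hindex : (P : Subgroup H).index = a := by
    have h := Subgroup.card_mul_index (P : Subgroup H)
    rw [hcardP, hcard, mul_comm a b] at h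
    exact Nat.eq_of_mul_eq_mul_left hb.pos h
  have hn : Nat.card (Sylow b H) = 1 := by
    have h1 : Nat.card (Sylow b H) ∣ a := hindex ▸ Sylow.card_dvd_index P
    have hlt : Nat.card (Sylow b H) < b := lt_of_le_of_lt (Nat.le_of_dvd ha.pos h1) hab
    have h2 : Nat.card (Sylow b H) % b = 1 % b := card_sylow_modEq_one b H
    rwa [Nat.mod_eq_of_lt hlt, Nat.mod_eq_of_lt hb.one_lt] at h2
  haveI : Subsingleton (Sylow b H) := (Nat.card_eq_one_iff_unique.mp hn).1
  have hnorm : (P : Subgroup H).Normal := by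
    rw [← Subgroup.normalizer_eq_top_iff, Subgroup.eq_top_iff']
    intro g
    exact Sylow.smul_eq_iff_mem_normalizer.mp (Subsingleton.elim _ _)
  exact ⟨P, Sylow.characteristic_of_normal P hnorm, hcardP⟩

/-- A characteristic subgroup of a normal subgroup is normal. -/
lemma IGaux_normal_map_of_char {G : Type*} [Group G] (N : Subgroup G) [N.Normal]
    (K : Subgroup N) [hK : K.Characteristic] : (K.map N.subtype).Normal := by
  constructor
  intro x hx g
  obtain ⟨k, hk, rfl⟩ := hx
  have h1 : (MulAut.conjNormal g) k ∈ K := by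
    have h := Subgroup.characteristic_iff_map_eq.mp hK (MulAut.conjNormal g)
    rw [← h]
    exact ⟨k, hk, rfl⟩
  exact ⟨(MulAut.conjNormal g) k, h1, by
    simp [MulAut.conjNormal_apply]⟩

/-- If `G` has a nontrivial normal subgroup whose quotient has order a product of
two distinct primes, then the intersection graph has a triangle. -/
lemma IGaux_triangle {G : Type*} [Group G] (N : Subgroup G) [N.Normal]
    (hNbot : N ≠ ⊥) {t u : ℕ} (ht : t.Prime) (hu : u.Prime) (htu : t ≠ u)
    (hQ : Nat.card (G ⧸ N) = t * u) :
    ∃ s, (interGraph G).IsNClique 3 s := by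
  haveI : Finite (G ⧸ N) := Nat.finite_of_card_ne_zero (by rw [hQ]; exact Nat.mul_ne_zero ht.pos.ne' hu.pos.ne')
  haveI : Fact t.Prime := ⟨ht⟩
  haveI : Fact u.Prime := ⟨hu⟩
  obtain ⟨A, hA⟩ := Sylow.exists_subgroup_card_pow_prime (G := G ⧸ N) t (n := 1)
    (by rw [pow_one, hQ]; exact dvd_mul_right _ _)
  obtain ⟨B, hB⟩ := Sylow.exists_subgroup_card_pow_prime (G := G ⧸ N) u (n := 1)
    (by rw [pow_one, hQ]; exact dvd_mul_left _ _)
  rw [pow_one] at hA hB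
  set f := QuotientGroup.mk' N with hf
  have hfs : Function.Surjective f := QuotientGroup.mk'_surjective N
  set H1 := A.comap f with hH1
  set H2 := B.comap f with hH2
  have hNH1 : N ≤ H1 := by
    intro x hx
    have hx1 : f x = 1 := (QuotientGroup.eq_one_iff x).mpr hx
    rw [hH1, Subgroup.mem_comap, hx1]
    exact A.one_mem
  have hNH2 : N ≤ H2 := by
    intro x hx
    have hx1 : f x = 1 := (QuotientGroup.eq_one_iff x).mpr hx
    rw [hH2, Subgroup.mem_comap, hx1]
    exact B.one_mem
  have hmap1 : H1.map f = A := Subgroup.map_comap_eq_self_of_surjective hfs A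
  have hmap2 : H2.map f = B := Subgroup.map_comap_eq_self_of_surjective hfs B
  have hmapN : N.map f = ⊥ := by
    rw [eq_bot_iff]
    rintro _ ⟨x, hx, rfl⟩
    exact (QuotientGroup.eq_one_iff x).mpr hx
  have hAT : A ≠ ⊤ := by
    intro h
    rw [h, Subgroup.card_top, hQ] at hA
    nlinarith [ht.two_le, hu.two_le]
  have hBT : B ≠ ⊤ := by
    intro h
    rw [h, Subgroup.card_top, hQ] at hB
    nlinarith [ht.two_le, hu.two_le]
  have hNtop : N ≠ ⊤ := by
    intro h
    have h1 : N.index = 1 := h ▸ Subgroup.index_top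
    rw [Subgroup.index_eq_card, hQ] at h1
    nlinarith [ht.two_le, hu.two_le]
  have hH1T : H1 ≠ ⊤ := by
    intro h
    apply hAT
    rw [← hmap1, h, Subgroup.map_top_of_surjective f hfs]
  have hH2T : H2 ≠ ⊤ := by
    intro h
    apply hBT
    rw [← hmap2, h, Subgroup.map_top_of_surjective f hfs]
  have hH1B : H1 ≠ ⊥ := fun h => hNbot (le_bot_iff.mp (h ▸ hNH1))
  have hH2B : H2 ≠ ⊥ := fun h => hNbot (le_bot_iff.mp (h ▸ hNH2))
  have hH12 : H1 ≠ H2 := by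
    intro h
    have : A = B := by rw [← hmap1, ← hmap2, h]
    rw [← this, hA] at hB
    exact htu hB
  have hNH1' : N ≠ H1 := by
    intro h
    have : A = ⊥ := by rw [← hmap1, ← h, hmapN]
    rw [this, Subgroup.card_bot] at hA
    exact ht.one_lt.ne hA
  have hNH2' : N ≠ H2 := by
    intro h
    have : B = ⊥ := by rw [← hmap2, ← h, hmapN]
    rw [this, Subgroup.card_bot] at hB
    exact hu.one_lt.ne hB
  classical
  refine ⟨{⟨N, hNbot, hNtop⟩, ⟨H1, hH1B, hH1T⟩, ⟨H2, hH2B, hH2T⟩},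
    SimpleGraph.is3Clique_triple_iff.mpr ⟨?_, ?_, ?_⟩⟩
  · exact ⟨fun h => hNH1' (congrArg Subtype.val h), by
      rw [inf_eq_left.mpr hNH1]; exact hNbot⟩
  · exact ⟨fun h => hNH2' (congrArg Subtype.val h), by
      rw [inf_eq_left.mpr hNH2]; exact hNbot⟩
  · exact ⟨fun h => hH12 (congrArg Subtype.val h),
      fun h => hNbot (le_bot_iff.mp (h ▸ le_inf hNH1 hNH2))⟩


/-- From a nontrivial normal subgroup whose order divides a product of two
distinct primes, extract a normal subgroup of prime order. -/
lemma IGaux_key {G : Type*} [Group G] [Finite G] {x y : ℕ} (hx : x.Prime) (hy : y.Prime)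
    (hxy : x ≠ y) (C : Subgroup G) [hCn : C.Normal] (hCbot : C ≠ ⊥)
    (hd : Nat.card C ∣ x * y) :
    ∃ N : Subgroup G, N.Normal ∧ N ≠ ⊥ ∧ (Nat.card N = x ∨ Nat.card N = y) := by
  rcases IGaux_dvd_two_primes hx hy hd with h | h | h | h
  · exact absurd (Subgroup.card_eq_one.mp h) hCbot
  · exact ⟨C, hCn, hCbot, Or.inl h⟩
  · exact ⟨C, hCn, hCbot, Or.inr h⟩
  · -- |C| = x * y : take the characteristic Sylow subgroup for the larger prime
    have hsub : ∀ b : ℕ, b.Prime → (∃ a : ℕ, a.Prime ∧ a < b ∧ Nat.card C = a * b) →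
        (b = x ∨ b = y) → ∃ N : Subgroup G, N.Normal ∧ N ≠ ⊥ ∧
          (Nat.card N = x ∨ Nat.card N = y) := by
      rintro b hb ⟨a, ha, hab, hC⟩ hbxy
      obtain ⟨P, hPchar, hPcard⟩ := IGaux_char_subgroup (H := C) ha hb hab hC
      haveI := hPchar
      refine ⟨P.map C.subtype, IGaux_normal_map_of_char C P, ?_, ?_⟩
      · intro hbt
        have : Nat.card (P.map C.subtype) = 1 := by rw [hbt]; exact Subgroup.card_bot
        rw [Nat.card_congr (Subgroup.equivMapOfInjective P C.subtype
          C.subtype_injective).toEquiv.symm, hPcard] at this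
        exact hb.one_lt.ne' this
      · have : Nat.card (P.map C.subtype) = b := by
          rw [Nat.card_congr (Subgroup.equivMapOfInjective P C.subtype
            C.subtype_injective).toEquiv.symm, hPcard]
        rcases hbxy with rfl | rfl
        · exact Or.inl this
        · exact Or.inr this
    rcases hxy.lt_or_gt with hlt | hlt
    · exact hsub y hy ⟨x, hx, hlt, h⟩ (Or.inr rfl)
    · exact hsub x hx ⟨y, hy, hlt, by rw [h, mul_comm]⟩ (Or.inl rfl)

/-- Main reduction: if the commutator-like normal subgroup has order dividing a
product of two of the three primes, the intersection graph has a triangle. -/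
lemma IGaux_main {G : Type*} [Group G] [Finite G] {x y z : ℕ}
    (hx : x.Prime) (hy : y.Prime) (hz : z.Prime)
    (hxy : x ≠ y) (hxz : x ≠ z) (hyz : y ≠ z)
    (hcard : Nat.card G = x * (y * z))
    (C : Subgroup G) [C.Normal] (hCbot : C ≠ ⊥) (hd : Nat.card C ∣ y * z) :
    ∃ s, (interGraph G).IsNClique 3 s := by
  obtain ⟨N, hNn, hNbot, hNcard⟩ := IGaux_key hy hz hyz C hCbot hd
  haveI := hNn
  have hsplit := Subgroup.card_eq_card_quotient_mul_card_subgroup N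
  rcases hNcard with hs | hs
  · have hQ : Nat.card (G ⧸ N) = x * z := by
      apply Nat.eq_of_mul_eq_mul_right hy.pos
      rw [← hs]
      rw [hcard] at hsplit
      rw [← hsplit, hs]
      ring
    exact IGaux_triangle N hNbot hx hz hxz hQ
  · have hQ : Nat.card (G ⧸ N) = x * y := by
      apply Nat.eq_of_mul_eq_mul_right hz.pos
      rw [← hs]
      rw [hcard] at hsplit
      rw [← hsplit, hs]
      ring
    exact IGaux_triangle N hNbot hx hy hxy hQ

theorem intersectionGraph_has_triangle_of_nonabelian_solvable_pqr
    (p q r : ℕ) (hp : p.Prime) (hq : q.Prime) (hr : r.Prime)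
    (hpq : p ≠ q) (hpr : p ≠ r) (hqr : q ≠ r)
    (G : Type*) [Group G] [Group.IsSolvable G] (hcard : Nat.card G = p * q * r)
    (hna : ¬ ∀ a b : G, a * b = b * a) :
    ∃ s, (interGraph G).IsNClique 3 s := by
  haveI : Finite G := Nat.finite_of_card_ne_zero (by
    rw [hcard]
    exact Nat.mul_ne_zero (Nat.mul_ne_zero hp.pos.ne' hq.pos.ne') hr.pos.ne')
  -- The commutator subgroup is a nontrivial proper normal subgroup.
  have hCbot : commutator G ≠ ⊥ := by
    intro h
    apply hna
    intro a b
    have hm : open scoped commutatorElement in ⁅a, b⁆ ∈ commutator G :=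
      Subgroup.commutator_mem_commutator (Subgroup.mem_top a) (Subgroup.mem_top b)
    rw [h, Subgroup.mem_bot] at hm
    exact commutatorElement_eq_one_iff_mul_comm.mp hm
  have hCtop : commutator G ≠ ⊤ := by
    intro h
    have hall : ∀ n, derivedSeries G n = ⊤ := by
      intro n
      induction n with
      | zero => exact derivedSeries_zero G
      | succ n ih =>
        rw [derivedSeries_succ, ih]
        exact h
    obtain ⟨n, hn⟩ := Group.IsSolvable.solvable (G := G)
    have hbt : (⊤ : Subgroup G) = ⊥ := (hall n) ▸ hn
    apply hna
    intro a b
    have ha : a = 1 := Subgroup.mem_bot.mp (hbt ▸ Subgroup.mem_top a)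
    have hb : b = 1 := Subgroup.mem_bot.mp (hbt ▸ Subgroup.mem_top b)
    rw [ha, hb]
  have hdvd : Nat.card (commutator G) ∣ p * q * r :=
    hcard ▸ Subgroup.card_subgroup_dvd_card (commutator G)
  have hdtop : Nat.card (commutator G) ≠ p * q * r := fun h =>
    hCtop (Subgroup.eq_top_of_card_eq _ (by rw [h, hcard]))
  obtain ⟨c, hc⟩ := hdvd
  have hpqr0 : p * q * r ≠ 0 :=
    Nat.mul_ne_zero (Nat.mul_ne_zero hp.pos.ne' hq.pos.ne') hr.pos.ne'
  have hc1 : c ≠ 1 := by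
    rintro rfl
    rw [mul_one] at hc
    exact hdtop hc.symm
  have hw : c.minFac.Prime := Nat.minFac_prime hc1
  have hwc : c.minFac ∣ c := Nat.minFac_dvd c
  have hwpqr : c.minFac ∣ p * q * r := hc ▸ (hwc.mul_left _)
  obtain ⟨c', hc'⟩ := hwc
  have hcancel : ∀ m : ℕ, p * q * r = c.minFac * m → Nat.card (commutator G) * c' = m := by
    intro m hm
    apply Nat.eq_of_mul_eq_mul_left hw.pos
    have hkey : c.minFac * (Nat.card (commutator G) * c') = p * q * r := by
      rw [hc]
      conv_rhs => rw [hc']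
      ring
    rw [hkey, hm]
  rcases (Nat.Prime.dvd_mul hw).mp hwpqr with h1 | hmr
  · rcases (Nat.Prime.dvd_mul hw).mp h1 with hmp | hmq
    · -- minFac = p
      have hwp : c.minFac = p := (Nat.prime_dvd_prime_iff_eq hw hp).mp hmp
      have hdqr : Nat.card (commutator G) ∣ q * r :=
        ⟨c', (hcancel (q * r) (by rw [hwp]; ring)).symm⟩
      exact IGaux_main hp hq hr hpq hpr hqr (by rw [hcard]; ring) (commutator G) hCbot hdqr
    · -- minFac = q
      have hwq : c.minFac = q := (Nat.prime_dvd_prime_iff_eq hw hq).mp hmq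
      have hdpr : Nat.card (commutator G) ∣ p * r :=
        ⟨c', (hcancel (p * r) (by rw [hwq]; ring)).symm⟩
      exact IGaux_main hq hp hr hpq.symm hqr hpr (by rw [hcard]; ring) (commutator G) hCbot hdpr
  · -- minFac = r
    have hwr : c.minFac = r := (Nat.prime_dvd_prime_iff_eq hw hr).mp hmr
    have hdpq : Nat.card (commutator G) ∣ p * q :=
      ⟨c', (hcancel (p * q) (by rw [hwr]; ring)).symm⟩
    exact IGaux_main hr hp hq hpr.symm hqr.symm hpq (by rw [hcard]; ring) (commutator G) hCbot hdpq
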